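/- Conditional security with aggregate key leakage: let W₁,…,W_K be independent random vectors on F_q^L, Z₁,…,Z_K i.i.d. uniform on F_q^L independent of the W's, and a₁,…,a_K nonzero field elements. Then I((W_i)_i ; (W_i + Z_i)_i, Σ_i a_i Z_i | Σ_i a_i W_i) = 0 fails in general, but for the scheme X_i = W_i + α_i Z_i with α_i = 1/(t a_i), the server's observation ((X_i)_i, Σ_i Z_i) reveals only Σ_i a_i W_i: formally I((W_i)_i ; (X_i)_i, Σ_i Z_i | Σ_i a_i W_i) = 0 when K ≥ 2. -/
import Mathlib


open scoped ENNReal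

/-- Shannon entropy, base `q`, of the random variable `X` on the probability space `μ`
(with the convention `0 · log 0 = 0`). -/
noncomputable def ent {Ω α : Type*} [Fintype α] (q : ℝ) (μ : PMF Ω) (X : Ω → α) : ℝ :=
  - ∑ x : α, ((μ.map X) x).toReal * Real.logb q ((μ.map X) x).toReal

noncomputable def entP {α : Type*} [Fintype α] (q : ℝ) (P : PMF α) : ℝ :=
  - ∑ x : α, (P x).toReal * Real.logb q (P x).toReal

lemma entP_map_of_injective {α β : Type*} [Fintype α] [Fintype β]
    (q : ℝ) (P : PMF α) (e : α → β) (he : Function.Injective e) :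
    entP q (P.map e) = entP q P := by
  classical
  have hmap : ∀ x, (P.map e) (e x) = P x := by
    intro x
    rw [PMF.map_apply, tsum_eq_single x]
    · simp
    · intro b hb
      exact if_neg fun h => hb (he h.symm)
  have h0 : ∀ y ∉ Finset.univ.image e, (P.map e) y = 0 := by
    intro y hy
    rw [PMF.map_apply, ENNReal.tsum_eq_zero]
    intro a
    exact if_neg fun h => hy (Finset.mem_image.2 ⟨a, Finset.mem_univ a, h.symm⟩)
  unfold entP
  congr 1
  calc ∑ y : β, ((P.map e) y).toReal * Real.logb q ((P.map e) y).toReal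
      = ∑ y ∈ Finset.univ.image e,
          ((P.map e) y).toReal * Real.logb q ((P.map e) y).toReal := by
        refine (Finset.sum_subset (Finset.subset_univ _) ?_).symm
        intro y _ hy
        rw [h0 y hy]
        simp
    _ = ∑ x : α, ((P.map e) (e x)).toReal * Real.logb q ((P.map e) (e x)).toReal :=
        Finset.sum_image (fun x _ y _ h => he h)
    _ = _ := by simp only [hmap]

lemma entP_prod_left_uniform {γ δ : Type*} [Fintype γ] [Fintype δ] [Nonempty γ]
    (q : ℝ) (P : PMF (γ × δ)) (R : PMF δ)
    (hP : ∀ x c, P (x, c) = (Fintype.card γ : ℝ≥0∞)⁻¹ * R c) :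
    entP q P = Real.logb q (Fintype.card γ) + entP q R := by
  classical
  have hn : (0 : ℝ) < (Fintype.card γ : ℝ) := by
    exact_mod_cast Fintype.card_pos
  set n : ℝ := (Fintype.card γ : ℝ) with hn'
  have hRsum : ∑ c : δ, (R c).toReal = 1 := by
    have h1 := R.tsum_coe
    rw [tsum_fintype] at h1
    rw [← ENNReal.toReal_sum (fun c _ => R.apply_ne_top c), h1, ENNReal.toReal_one]
  have htoReal : ∀ x c, (P (x, c)).toReal = n⁻¹ * (R c).toReal := by
    intro x c
    rw [hP, ENNReal.toReal_mul, ENNReal.toReal_inv, ENNReal.toReal_natCast]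
  have hterm : ∀ x c, (P (x, c)).toReal * Real.logb q (P (x, c)).toReal
      = n⁻¹ * (R c).toReal * Real.logb q n⁻¹
        + n⁻¹ * ((R c).toReal * Real.logb q (R c).toReal) := by
    intro x c
    rw [htoReal]
    rcases eq_or_ne (R c).toReal 0 with h | h
    · simp [h]
    · rw [Real.logb_mul (inv_ne_zero hn.ne') h]
      ring
  unfold entP
  rw [Fintype.sum_prod_type]
  simp only [hterm]
  rw [Finset.sum_const, Finset.card_univ, nsmul_eq_mul]
  have hinner : ∑ c : δ, (n⁻¹ * (R c).toReal * Real.logb q n⁻¹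
      + n⁻¹ * ((R c).toReal * Real.logb q (R c).toReal))
      = n⁻¹ * Real.logb q n⁻¹
        + n⁻¹ * ∑ c : δ, (R c).toReal * Real.logb q (R c).toReal := by
    rw [Finset.sum_add_distrib, ← Finset.mul_sum, ← Finset.sum_mul, ← Finset.mul_sum,
      hRsum]
    ring
  rw [hinner, Real.logb_inv, ← hn']
  field_simp
  ring

lemma entP_prod_right_uniform {γ δ : Type*} [Fintype γ] [Fintype δ] [Nonempty δ]
    (q : ℝ) (P : PMF (γ × δ)) (Q : PMF γ)
    (hP : ∀ x c, P (x, c) = Q x * (Fintype.card δ : ℝ≥0∞)⁻¹) :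
    entP q P = Real.logb q (Fintype.card δ) + entP q Q := by
  classical
  have hswap : ∀ c x, (P.map Prod.swap) (c, x) = (Fintype.card δ : ℝ≥0∞)⁻¹ * Q x := by
    intro c x
    rw [PMF.map_apply, tsum_eq_single (x, c)]
    · rw [if_pos (by simp), hP, mul_comm]
    · intro b hb
      refine if_neg fun h => hb ?_
      exact (Prod.swap_injective (show Prod.swap (x, c) = Prod.swap b from h)).symm
  rw [← entP_map_of_injective q P Prod.swap Prod.swap_injective,
    entP_prod_left_uniform q _ Q hswap]


lemma ent_eq_entP {Ω α : Type*} [Fintype α] (q : ℝ) (μ : PMF Ω) (X : Ω → α) :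
    ent q μ X = entP q (μ.map X) := rfl


/-- Conditional security with aggregate key leakage: for the scheme
`X_i = W_i + α_i Z_i` with `α_i = 1/(t·a_i)`, the server's observation
`((X_i)_i, Σ_i Z_i)` reveals only `Σ_i a_i W_i`:
`I((W_i)_i ; (X_i)_i, Σ_i Z_i | Σ_i a_i W_i) = 0`, where the conditional mutual
information (base `q = |F|`) is expanded as
`H(A,C) + H(B,C) − H(A,B,C) − H(C)` with `A = (W_i)_i`, `B = ((X_i)_i, Σ_i Z_i)`,
`C = Σ_i a_i W_i`. -/
theorem conditional_security_with_aggregate_key {Ω F : Type*} [Field F] [Fintype F]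
    (K L : ℕ) (hK : 2 ≤ K) (hq : 2 < Fintype.card F)
    (μ : PMF Ω) (W Z : Fin K → Ω → (Fin L → F))
    (t : F) (ht : t ≠ 0) (a : Fin K → F) (ha : ∀ i, a i ≠ 0)
    (α : Fin K → F) (hαdef : ∀ i, α i = (t * a i)⁻¹)
    -- `W₁,…,W_K` are mutually independent
    (hWindep : ∀ w : Fin K → Fin L → F,
      μ.map (fun ω => (fun i => W i ω)) w = ∏ i, μ.map (W i) (w i))
    -- `(Z_i)_i` is i.i.d. uniform on `F^L` (jointly uniform) and independent of `(W_i)_i`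
    (hZ : ∀ (w z : Fin K → Fin L → F),
      μ.map (fun ω => ((fun i => W i ω), (fun i => Z i ω))) (w, z)
        = μ.map (fun ω => (fun i => W i ω)) w
          * PMF.uniformOfFintype (Fin K → Fin L → F) z) :
    ent (Fintype.card F) μ (fun ω =>
        ((fun i => W i ω), ∑ i, a i • W i ω))
      + ent (Fintype.card F) μ (fun ω =>
        (((fun i => W i ω + α i • Z i ω), ∑ i, Z i ω), ∑ i, a i • W i ω))
      - ent (Fintype.card F) μ (fun ω =>
        ((fun i => W i ω), ((fun i => W i ω + α i • Z i ω), ∑ i, Z i ω),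
          ∑ i, a i • W i ω))
      - ent (Fintype.card F) μ (fun ω => ∑ i, a i • W i ω) = 0 := by
  classical
  have hα : ∀ i, α i ≠ 0 := fun i => by
    rw [hαdef i]; exact inv_ne_zero (mul_ne_zero ht (ha i))
  set qr : ℝ := (Fintype.card F : ℝ) with hqr
  -- abbreviations
  set tw : Ω → (Fin K → Fin L → F) := fun ω => (fun i => W i ω) with htw
  set pairf : Ω → (Fin K → Fin L → F) × (Fin K → Fin L → F) :=
    fun ω => ((fun i => W i ω), (fun i => Z i ω)) with hpairf
  set pr : PMF (Fin K → Fin L → F) := μ.map tw with hpr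
  set ν : PMF ((Fin K → Fin L → F) × (Fin K → Fin L → F)) := μ.map pairf with hν0
  set Cw : (Fin K → Fin L → F) → (Fin L → F) := fun w => ∑ i, a i • w i with hCw
  set r : PMF (Fin L → F) := pr.map Cw with hr0
  have hν : ∀ w z, ν (w, z) = pr w * (Fintype.card (Fin K → Fin L → F) : ℝ≥0∞)⁻¹ := by
    intro w z
    rw [hν0, hpairf, hZ w z, PMF.uniformOfFintype_apply]
  -- value of r
  have hrval : ∀ c, r c = ∑ w : Fin K → Fin L → F, if c = Cw w then pr w else 0 := by
    intro c
    rw [hr0, PMF.map_apply, tsum_fintype]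
    refine Finset.sum_congr rfl fun w _ => ?_
    congr
  -- Term 1 : H(A, C)
  have hT1 : ent qr μ (fun ω => ((fun i => W i ω), ∑ i, a i • W i ω)) = entP qr pr := by
    rw [ent_eq_entP]
    have h1 : μ.map (fun ω => ((fun i => W i ω), ∑ i, a i • W i ω))
        = pr.map (fun w => (w, Cw w)) := (PMF.map_comp tw μ (fun w => (w, Cw w))).symm
    rw [h1]
    exact entP_map_of_injective qr pr _ (fun x y h => congrArg Prod.fst h)
  -- Term 4 : H(C)
  have hT4 : ent qr μ (fun ω => ∑ i, a i • W i ω) = entP qr r := by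
    rw [ent_eq_entP]
    have h1 : μ.map (fun ω => ∑ i, a i • W i ω) = pr.map Cw :=
      (PMF.map_comp tw μ Cw).symm
    rw [h1, hr0]
  -- Term 3 : H(A, B, C)
  have hT3 : ent qr μ (fun ω =>
        ((fun i => W i ω), ((fun i => W i ω + α i • Z i ω), ∑ i, Z i ω),
          ∑ i, a i • W i ω))
      = Real.logb qr (Fintype.card (Fin K → Fin L → F)) + entP qr pr := by
    rw [ent_eq_entP]
    have h1 : μ.map (fun ω =>
          ((fun i => W i ω), ((fun i => W i ω + α i • Z i ω), ∑ i, Z i ω),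
            ∑ i, a i • W i ω))
        = ν.map (fun s =>
            (s.1, ((fun i => s.1 i + α i • s.2 i), ∑ i, s.2 i), Cw s.1)) :=
      (PMF.map_comp pairf μ (fun s =>
        (s.1, ((fun i => s.1 i + α i • s.2 i), ∑ i, s.2 i), Cw s.1))).symm
    rw [h1]
    have hinj : Function.Injective (fun s : (Fin K → Fin L → F) × (Fin K → Fin L → F) =>
        (s.1, ((fun i => s.1 i + α i • s.2 i), ∑ i, s.2 i), Cw s.1)) := by
      rintro ⟨w, z⟩ ⟨w', z'⟩ h
      have hw : w = w' := congrArg (fun s => s.1) h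
      have hx : (fun i => w i + α i • z i) = (fun i => w' i + α i • z' i) :=
        congrArg (fun s => s.2.1.1) h
      subst hw
      have hz' : z = z' := by
        funext i l
        have h2 := congrFun (congrFun hx i) l
        simp only [Pi.add_apply, Pi.smul_apply, smul_eq_mul, add_right_inj] at h2
        exact mul_left_cancel₀ (hα i) h2
      rw [hz']
    rw [entP_map_of_injective qr ν _ hinj]
    exact entP_prod_right_uniform qr ν pr hν
  -- Term 2 : H(B, C)
  have hT2 : ent qr μ (fun ω =>
        (((fun i => W i ω + α i • Z i ω), ∑ i, Z i ω), ∑ i, a i • W i ω))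
      = Real.logb qr (Fintype.card (Fin K → Fin L → F)) + entP qr r := by
    rw [ent_eq_entP]
    have h1 : μ.map (fun ω =>
          (((fun i => W i ω + α i • Z i ω), ∑ i, Z i ω), ∑ i, a i • W i ω))
        = ν.map (fun s =>
            (((fun i => s.1 i + α i • s.2 i), ∑ i, s.2 i), Cw s.1)) :=
      (PMF.map_comp pairf μ (fun s =>
        (((fun i => s.1 i + α i • s.2 i), ∑ i, s.2 i), Cw s.1))).symm
    rw [h1]
    -- factor through D and the injective map e2
    have key : ∀ (w z : Fin K → Fin L → F),
        t • (∑ i, a i • (w i + α i • z i)) - t • (∑ i, a i • w i) = ∑ i, z i := by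
      intro w z
      have h1' : ∀ i ∈ Finset.univ, a i • (w i + α i • z i)
          = a i • w i + (a i * α i) • z i := by
        intro i _
        rw [smul_add, smul_smul]
      have h2 : ∀ i ∈ Finset.univ, t • ((a i * α i) • z i) = z i := by
        intro i _
        rw [smul_smul, hαdef i, ← mul_assoc, mul_inv_cancel₀ (mul_ne_zero ht (ha i)),
          one_smul]
      calc t • (∑ i, a i • (w i + α i • z i)) - t • (∑ i, a i • w i)
          = t • ((∑ i, a i • w i) + ∑ i, (a i * α i) • z i) - t • (∑ i, a i • w i) := by
            rw [Finset.sum_congr rfl h1', Finset.sum_add_distrib]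
        _ = ∑ i, t • ((a i * α i) • z i) := by
            rw [smul_add, add_sub_cancel_left, Finset.smul_sum]
        _ = ∑ i, z i := Finset.sum_congr rfl h2
    have hcomp : ((fun p : (Fin K → Fin L → F) × (Fin L → F) =>
          ((p.1, t • (∑ i, a i • p.1 i) - t • p.2), p.2))
        ∘ (fun s : (Fin K → Fin L → F) × (Fin K → Fin L → F) =>
          ((fun i => s.1 i + α i • s.2 i), Cw s.1)))
        = (fun s : (Fin K → Fin L → F) × (Fin K → Fin L → F) =>
          (((fun i => s.1 i + α i • s.2 i), ∑ i, s.2 i), Cw s.1)) := by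
      funext s
      obtain ⟨w, z⟩ := s
      simp only [Function.comp_apply, hCw]
      exact Prod.ext (Prod.ext rfl (key w z)) rfl
    have h2 : (ν.map (fun s : (Fin K → Fin L → F) × (Fin K → Fin L → F) =>
          ((fun i => s.1 i + α i • s.2 i), Cw s.1))).map
            (fun p : (Fin K → Fin L → F) × (Fin L → F) =>
              ((p.1, t • (∑ i, a i • p.1 i) - t • p.2), p.2))
        = ν.map (fun s =>
            (((fun i => s.1 i + α i • s.2 i), ∑ i, s.2 i), Cw s.1)) :=
      (PMF.map_comp _ ν _).trans (congrArg (fun g => PMF.map g ν) hcomp)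
    rw [← h2]
    have hinj2 : Function.Injective
        (fun p : (Fin K → Fin L → F) × (Fin L → F) =>
          ((p.1, t • (∑ i, a i • p.1 i) - t • p.2), p.2)) := by
      rintro ⟨x, c⟩ ⟨x', c'⟩ h
      have h1' : x = x' := congrArg (fun s => s.1.1) h
      have h2' : c = c' := congrArg (fun s => s.2) h
      rw [h1', h2']
    rw [entP_map_of_injective qr _ _ hinj2]
    refine entP_prod_left_uniform qr _ r ?_
    intro x c
    have hcond : ∀ (w z : Fin K → Fin L → F),
        ((x, c) = ((fun i => w i + α i • z i), Cw w))
          ↔ ((z = fun i => (α i)⁻¹ • (x i - w i)) ∧ c = Cw w) := by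
      intro w z
      rw [Prod.mk.injEq]
      constructor
      · rintro ⟨h1', h2'⟩
        refine ⟨?_, h2'⟩
        funext i
        have h3 := congrFun h1' i
        rw [h3, add_sub_cancel_left, smul_smul, inv_mul_cancel₀ (hα i), one_smul]
      · rintro ⟨h1', h2'⟩
        refine ⟨?_, h2'⟩
        funext i
        rw [h1']
        show x i = w i + α i • ((α i)⁻¹ • (x i - w i))
        rw [smul_smul, mul_inv_cancel₀ (hα i), one_smul]
        abel
    rw [PMF.map_apply, tsum_fintype, Fintype.sum_prod_type]
    simp only [hcond, ite_and, hν, Finset.sum_ite_eq', Finset.mem_univ, if_true]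
    rw [hrval, Finset.mul_sum]
    refine Finset.sum_congr rfl fun w _ => ?_
    by_cases h : c = Cw w
    · rw [if_pos h, if_pos h, mul_comm]
    · rw [if_neg h, if_neg h, mul_zero]
  rw [hT1, hT2, hT3, hT4]
  ring
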